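/- arXiv:2604.06557 — 3 statements merged into one kernel-verified Lean document; each statement's English description precedes it below -/
import Mathlib

section
/- Let (Γ, d) be an admissible fractional Brauer graph with Nakayama map ν. Then the maps s'([h]) = s(h) and ρ'([h]) = [ρ(h)] are well defined on the set H/⟨ν⟩ of ⟨ν⟩-orbits, ρ' is a bijection of H/⟨ν⟩, and for every vertex v the set of ⟨ν⟩-orbits contained in s⁻¹(v) is a single ⟨ρ'⟩-orbit. Consequently the reduced form Γ_red = (V, H/⟨ν⟩, s', ι', ρ'), where ι'([h]) = [ι(h)], is again a ribbon graph. -/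
/-- A ribbon graph: vertices `V`, half-edges `H`, source map `s`,
fixed-point-free involution `ι`, and a permutation `ρ` whose orbits are
exactly the fibers `s⁻¹(v)`. -/
structure RibbonGraph (V H : Type*) where
  s : H → V
  ι : H → H
  ρ : Equiv.Perm H
  ι_invol : ∀ h, ι (ι h) = h
  ι_ne : ∀ h, ι h ≠ h
  s_surj : Function.Surjective s
  s_ρ : ∀ h, s (ρ h) = s h
  ρ_trans : ∀ h h', s h = s h' → ∃ k : ℤ, (ρ ^ k) h = h'

/-- An admissible fractional Brauer graph: a ribbon graph with a positive
degree function `d` satisfying the two AFBG axioms. -/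
structure AFBG (V H : Type*) extends RibbonGraph V H where
  d : V → ℤ
  d_pos : ∀ v, 0 < d v
  ax_i : ∀ h, ι ((ρ ^ d (s h)) h) = (ρ ^ d (s (ι h))) (ι h)
  ax_ii : ∀ (h : H) (n : ℤ), (ρ ^ (n * d (s h))) h ≠ ι h

/-- The setoid on `H` whose classes are the orbits of the cyclic group `⟨ν⟩`. -/
def permOrbitSetoid {H : Type*} (ν : Equiv.Perm H) : Setoid H where
  r x y := ∃ k : ℤ, (ν ^ k) x = y
  iseqv := by
    constructor
    · intro x
      exact ⟨0, rfl⟩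
    · rintro x y ⟨k, hk⟩
      refine ⟨-k, ?_⟩
      rw [← hk, ← Equiv.Perm.mul_apply, ← zpow_add]
      simp
    · rintro x y z ⟨k, hk⟩ ⟨l, hl⟩
      refine ⟨l + k, ?_⟩
      rw [← hl, ← hk, ← Equiv.Perm.mul_apply, ← zpow_add]
theorem Equiv.Perm.apply_inv_self {α : Type*} (f : Equiv.Perm α) (x : α) :
    f (f⁻¹ x) = x := by
  simp

/-- for an AFBG with Nakayama map ν, the maps s'([h]) = s(h) and
ρ'([h]) = [ρ(h)] are well defined on H/⟨ν⟩, ρ' is a bijection, and for every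
vertex v the set of ⟨ν⟩-orbits contained in s⁻¹(v) is a single ⟨ρ'⟩-orbit.
Consequently the reduced form Γ_red = (V, H/⟨ν⟩, s', ι', ρ') is again a
ribbon graph. -/
theorem stmt6 {V H : Type*} (Γ : AFBG V H)
    (ν : Equiv.Perm H) (hν : ∀ h, ν h = (Γ.ρ ^ Γ.d (Γ.s h)) h) :
    ∃ (s' : Quotient (permOrbitSetoid ν) → V)
      (ρ' : Equiv.Perm (Quotient (permOrbitSetoid ν))),
      (∀ h : H, s' (Quotient.mk (permOrbitSetoid ν) h) = Γ.s h) ∧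
      (∀ h : H, ρ' (Quotient.mk (permOrbitSetoid ν) h)
          = Quotient.mk (permOrbitSetoid ν) (Γ.ρ h)) ∧
      (∀ (v : V) (x y : Quotient (permOrbitSetoid ν)),
          s' x = v → s' y = v → ∃ k : ℤ, (ρ' ^ k) x = y) ∧
      ∃ G : RibbonGraph V (Quotient (permOrbitSetoid ν)),
        G.s = s' ∧
        (∀ h : H, G.ι (Quotient.mk (permOrbitSetoid ν) h)
            = Quotient.mk (permOrbitSetoid ν) (Γ.ι h)) ∧
        (∀ x, G.ρ x = ρ' x) := by
  -- s is constant along powers of ρ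
  have sρpow : ∀ (k : ℤ), ∀ h, Γ.s ((Γ.ρ ^ k) h) = Γ.s h := by
    intro k
    induction k using Int.induction_on with
    | zero => simp
    | succ n ih =>
      intro h
      rw [zpow_add_one, Equiv.Perm.mul_apply, ih, Γ.s_ρ]
    | pred n ih =>
      intro h
      have hs : Γ.s (Γ.ρ⁻¹ h) = Γ.s h := by
        conv_rhs => rw [← Equiv.Perm.apply_inv_self Γ.ρ h]
        rw [Γ.s_ρ]
      rw [zpow_sub_one, Equiv.Perm.mul_apply, ih, hs]
  have sν : ∀ h, Γ.s (ν h) = Γ.s h := by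
    intro h; rw [hν]; exact sρpow _ _
  have νinv : ∀ h, ν⁻¹ h = (Γ.ρ ^ (-(Γ.d (Γ.s h)))) h := by
    intro h
    apply ν.injective
    rw [Equiv.Perm.apply_inv_self, hν, sρpow, ← Equiv.Perm.mul_apply, ← zpow_add]
    simp
  have sνinv : ∀ h, Γ.s (ν⁻¹ h) = Γ.s h := by
    intro h
    conv_rhs => rw [← Equiv.Perm.apply_inv_self ν h]
    rw [sν]
  have νpow : ∀ (k : ℤ), ∀ h, (ν ^ k) h = (Γ.ρ ^ (k * Γ.d (Γ.s h))) h := by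
    intro k
    induction k using Int.induction_on with
    | zero => simp
    | succ n ih =>
      intro h
      rw [zpow_add_one, Equiv.Perm.mul_apply, ih, hν, sρpow,
        ← Equiv.Perm.mul_apply, ← zpow_add]
      ring_nf
    | pred n ih =>
      intro h
      rw [zpow_sub_one, Equiv.Perm.mul_apply, ih, νinv, sρpow,
        ← Equiv.Perm.mul_apply, ← zpow_add]
      ring_nf
  have sνpow : ∀ (k : ℤ), ∀ h, Γ.s ((ν ^ k) h) = Γ.s h := by
    intro k h; rw [νpow]; exact sρpow _ _
  -- ι commutes with ν
  have ιν : ∀ h, Γ.ι (ν h) = ν (Γ.ι h) := by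
    intro h
    rw [hν h, hν (Γ.ι h)]
    exact Γ.ax_i h
  have ινinv : ∀ h, Γ.ι (ν⁻¹ h) = ν⁻¹ (Γ.ι h) := by
    intro h
    apply ν.injective
    rw [← ιν, Equiv.Perm.apply_inv_self, Equiv.Perm.apply_inv_self]
  have ινpow : ∀ (k : ℤ), ∀ h, Γ.ι ((ν ^ k) h) = (ν ^ k) (Γ.ι h) := by
    intro k
    induction k using Int.induction_on with
    | zero => simp
    | succ n ih =>
      intro h
      rw [zpow_add_one, Equiv.Perm.mul_apply, Equiv.Perm.mul_apply, ih, ιν]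
    | pred n ih =>
      intro h
      rw [zpow_sub_one, Equiv.Perm.mul_apply, Equiv.Perm.mul_apply, ih, ινinv]
  -- ρ commutes with ν
  have νρ : ∀ h, ν (Γ.ρ h) = Γ.ρ (ν h) := by
    intro h
    rw [hν, hν, Γ.s_ρ, ← Equiv.Perm.mul_apply, ← Equiv.Perm.mul_apply,
      ((Commute.refl Γ.ρ).zpow_left (Γ.d (Γ.s h))).eq]
  have νρinv : ∀ h, ν (Γ.ρ⁻¹ h) = Γ.ρ⁻¹ (ν h) := by
    intro h
    apply Γ.ρ.injective
    rw [← νρ, Equiv.Perm.apply_inv_self, Equiv.Perm.apply_inv_self]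
  have νinvρ : ∀ h, ν⁻¹ (Γ.ρ h) = Γ.ρ (ν⁻¹ h) := by
    intro h
    apply ν.injective
    rw [Equiv.Perm.apply_inv_self, νρ, Equiv.Perm.apply_inv_self]
  have ρνpow : ∀ (k : ℤ), ∀ h, Γ.ρ ((ν ^ k) h) = (ν ^ k) (Γ.ρ h) := by
    intro k
    induction k using Int.induction_on with
    | zero => simp
    | succ n ih =>
      intro h
      rw [zpow_add_one, Equiv.Perm.mul_apply, Equiv.Perm.mul_apply, ih, νρ]
    | pred n ih =>
      intro h
      rw [zpow_sub_one, Equiv.Perm.mul_apply, Equiv.Perm.mul_apply, ih, νinvρ]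
  have ρinvνpow : ∀ (k : ℤ), ∀ h, Γ.ρ⁻¹ ((ν ^ k) h) = (ν ^ k) (Γ.ρ⁻¹ h) := by
    intro k h
    apply Γ.ρ.injective
    rw [Equiv.Perm.apply_inv_self, ρνpow, Equiv.Perm.apply_inv_self]
  -- the quotient data
  set S := permOrbitSetoid ν with hS
  have hSr : ∀ a b : H, S.r a b ↔ ∃ k : ℤ, (ν ^ k) a = b := fun _ _ => Iff.rfl
  let s' : Quotient S → V :=
    Quotient.lift Γ.s (by
      rintro a b ⟨k, hk⟩
      rw [← hk, sνpow])
  let ρf : Quotient S → Quotient S :=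
    Quotient.map Γ.ρ (by
      rintro a b ⟨k, hk⟩
      exact ⟨k, by rw [← ρνpow, hk]⟩)
  let ρg : Quotient S → Quotient S :=
    Quotient.map (⇑Γ.ρ⁻¹) (by
      rintro a b ⟨k, hk⟩
      exact ⟨k, by rw [← ρinvνpow, hk]⟩)
  let ρ' : Equiv.Perm (Quotient S) :=
    { toFun := ρf
      invFun := ρg
      left_inv := by
        intro x
        induction x using Quotient.ind with
        | _ h => exact Quotient.sound ⟨0, by simp⟩
      right_inv := by
        intro x
        induction x using Quotient.ind with
        | _ h => exact Quotient.sound ⟨0, by simp⟩ }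
  have hρ'mk : ∀ h, ρ' (Quotient.mk S h) = Quotient.mk S (Γ.ρ h) := fun _ => rfl
  have hρ'invmk : ∀ h, ρ'⁻¹ (Quotient.mk S h) = Quotient.mk S (Γ.ρ⁻¹ h) := by
    intro h
    apply ρ'.injective
    rw [Equiv.Perm.apply_inv_self, hρ'mk, Equiv.Perm.apply_inv_self]
  have hρ'pow : ∀ (k : ℤ), ∀ h, (ρ' ^ k) (Quotient.mk S h)
      = Quotient.mk S ((Γ.ρ ^ k) h) := by
    intro k
    induction k using Int.induction_on with
    | zero => simp
    | succ n ih =>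
      intro h
      rw [zpow_add_one, zpow_add_one, Equiv.Perm.mul_apply, Equiv.Perm.mul_apply,
        hρ'mk, ih]
    | pred n ih =>
      intro h
      rw [zpow_sub_one, zpow_sub_one, Equiv.Perm.mul_apply, Equiv.Perm.mul_apply,
        hρ'invmk, ih]
  let ι' : Quotient S → Quotient S :=
    Quotient.map Γ.ι (by
      rintro a b ⟨k, hk⟩
      exact ⟨k, by rw [← ινpow, hk]⟩)
  have trans' : ∀ (v : V) (x y : Quotient S), s' x = v → s' y = v →
      ∃ k : ℤ, (ρ' ^ k) x = y := by
    intro v x y hx hy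
    induction x using Quotient.ind with
    | _ a =>
    induction y using Quotient.ind with
    | _ b =>
    have hsab : Γ.s a = Γ.s b := by
      have ha : s' (Quotient.mk S a) = Γ.s a := rfl
      have hb : s' (Quotient.mk S b) = Γ.s b := rfl
      rw [ha] at hx; rw [hb] at hy; rw [hx, hy]
    obtain ⟨k, hk⟩ := Γ.ρ_trans a b hsab
    exact ⟨k, by rw [hρ'pow, hk]⟩
  refine ⟨s', ρ', fun h => rfl, hρ'mk, trans', ?_⟩
  refine ⟨⟨s', ι', ρ', ?_, ?_, ?_, ?_, fun x y hxy => trans' (s' y) x y hxy rfl⟩,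
    rfl, fun h => rfl, fun x => rfl⟩
  · intro x
    induction x using Quotient.ind with
    | _ h =>
      show Quotient.mk S (Γ.ι (Γ.ι h)) = Quotient.mk S h
      rw [Γ.ι_invol]
  · intro x
    induction x using Quotient.ind with
    | _ h =>
      intro heq
      have heq' : Quotient.mk S (Γ.ι h) = Quotient.mk S h := heq
      obtain ⟨k, hk⟩ := Quotient.exact heq'
      have : Γ.ι h = (ν ^ (-k)) h := by
        have h0 : Γ.ι h = (ν ^ (-k)) ((ν ^ k) (Γ.ι h)) := by
          rw [← Equiv.Perm.mul_apply, ← zpow_add]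
          simp
        rw [h0, hk]
      rw [νpow] at this
      exact Γ.ax_ii h (-k) this.symm
  · intro v
    obtain ⟨h, hh⟩ := Γ.s_surj v
    exact ⟨Quotient.mk S h, hh⟩
  · intro x
    induction x using Quotient.ind with
    | _ h =>
      show s' (Quotient.mk S (Γ.ρ h)) = s' (Quotient.mk S h)
      show Γ.s (Γ.ρ h) = Γ.s h
      exact Γ.s_ρ h
end

section
/- Let (Γ, d) be an admissible fractional Brauer graph such that every fiber s⁻¹(v) is finite, with Nakayama map ν, and let Γ_red be its reduced form. Then for every vertex v, the number of ⟨ν⟩-orbits contained in s⁻¹(v) (i.e. the valency val_{Γ_red}(v)) equals gcd(val(v), d(v)), where val(v) = |s⁻¹(v)|. In particular val_{Γ_red}(v) divides d(v), so every vertex multiplicity d(v)/val_{Γ_red}(v) of (Γ_red, d) is a positive integer; that is, (Γ_red, d) is a Brauer graph. -/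
/-- for an AFBG with finite fibers and Nakayama map ν, the number
of ⟨ν⟩-orbits contained in s⁻¹(v) (the valency of v in the reduced form)
equals gcd(val(v), d(v)); in particular it divides d(v), so every vertex
multiplicity of the reduced form is a positive integer, i.e. the reduced form
is a Brauer graph. -/
theorem stmt8 {V H : Type*} (Γ : AFBG V H)
    (hfin : ∀ v : V, (Γ.s ⁻¹' {v}).Finite)
    (ν : Equiv.Perm H) (hν : ∀ h, ν h = (Γ.ρ ^ Γ.d (Γ.s h)) h) :
    ∀ v : V,
      Set.ncard {x : Quotient (permOrbitSetoid ν) |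
          ∃ h : H, Γ.s h = v ∧ x = Quotient.mk (permOrbitSetoid ν) h}
        = Int.gcd ((Γ.s ⁻¹' {v}).ncard : ℤ) (Γ.d v) ∧
      ((Set.ncard {x : Quotient (permOrbitSetoid ν) |
          ∃ h : H, Γ.s h = v ∧ x = Quotient.mk (permOrbitSetoid ν) h} : ℤ) ∣ Γ.d v) ∧
      (0 < Set.ncard {x : Quotient (permOrbitSetoid ν) |
          ∃ h : H, Γ.s h = v ∧ x = Quotient.mk (permOrbitSetoid ν) h}) := by
  intro v
  obtain ⟨h0, hh0⟩ := Γ.s_surj v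
  set d : ℤ := Γ.d v with hd
  -- s is invariant under integer powers of ρ
  have hsρ : ∀ (k : ℤ) (h : H), Γ.s ((Γ.ρ ^ k) h) = Γ.s h := by
    have hinv : ∀ h : H, Γ.s (Γ.ρ⁻¹ h) = Γ.s h := by
      intro h
      conv_rhs => rw [← show Γ.ρ (Γ.ρ⁻¹ h) = h from Γ.ρ.apply_symm_apply h]
      rw [Γ.s_ρ]
    intro k
    induction k using Int.induction_on with
    | zero => simp
    | succ n ih =>
        intro h
        rw [show ((n : ℤ) + 1) = (n : ℤ) + 1 by ring, zpow_add, zpow_one,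
          Equiv.Perm.mul_apply, ih, Γ.s_ρ]
    | pred n ih =>
        intro h
        rw [show (-(n : ℤ) - 1) = (-(n : ℤ)) + (-1) by ring, zpow_add,
          Equiv.Perm.mul_apply, ih, zpow_neg, zpow_one, hinv]
  -- ν acts on the fiber of v as ρ^d
  have hν' : ∀ (h : H), Γ.s h = v → ∀ k : ℤ, (ν ^ k) h = (Γ.ρ ^ (k * d)) h := by
    intro h hh
    have hstep : ∀ x : H, Γ.s x = v → ν x = (Γ.ρ ^ d) x := by
      intro x hx; rw [hν, hx, hd]
    have hstep' : ∀ x : H, Γ.s x = v → ν⁻¹ x = (Γ.ρ ^ (-d)) x := by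
      intro x hx
      have hs' : Γ.s ((Γ.ρ ^ (-d)) x) = v := by rw [hsρ, hx]
      have h2 : ν ((Γ.ρ ^ (-d)) x) = x := by
        rw [hstep _ hs', ← Equiv.Perm.mul_apply, ← zpow_add, add_neg_cancel,
          zpow_zero, Equiv.Perm.coe_one, id_eq]
      have h3 := congrArg (fun z => ν⁻¹ z) h2
      simp only [show ∀ z, ν⁻¹ (ν z) = z from ν.symm_apply_apply] at h3
      exact h3.symm
    intro k
    induction k using Int.induction_on with
    | zero => simp
    | succ n ih =>
        have hs' : Γ.s ((Γ.ρ ^ ((n : ℤ) * d)) h) = v := by rw [hsρ, hh]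
        have : (ν ^ ((n : ℤ) + 1)) h = ν ((ν ^ (n : ℤ)) h) := by
          rw [show ((n : ℤ) + 1) = 1 + (n : ℤ) by ring, zpow_add, zpow_one,
            Equiv.Perm.mul_apply]
        rw [this, ih, hstep _ hs', ← Equiv.Perm.mul_apply, ← zpow_add,
          show d + (n : ℤ) * d = ((n : ℤ) + 1) * d by ring]
    | pred n ih =>
        have hs' : Γ.s ((Γ.ρ ^ (-(n : ℤ) * d)) h) = v := by rw [hsρ, hh]
        have : (ν ^ (-(n : ℤ) - 1)) h = ν⁻¹ ((ν ^ (-(n : ℤ))) h) := by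
          rw [show (-(n : ℤ) - 1) = (-1) + (-(n : ℤ)) by ring, zpow_add,
            Equiv.Perm.mul_apply, zpow_neg_one]
        rw [this, ih, hstep' _ hs', ← Equiv.Perm.mul_apply, ← zpow_add,
          show -d + -(n : ℤ) * d = (-(n : ℤ) - 1) * d by ring]
  -- the stabilizer of h0 in ⟨ρ⟩ (as a subgroup of ℤ)
  set St : AddSubgroup ℤ :=
    { carrier := {m : ℤ | (Γ.ρ ^ m) h0 = h0}
      zero_mem' := by simp
      add_mem' := by
        intro x y hx hy
        simp only [Set.mem_setOf_eq] at *
        rw [zpow_add, Equiv.Perm.mul_apply, hy, hx]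
      neg_mem' := by
        intro x hx
        simp only [Set.mem_setOf_eq] at *
        conv_lhs => rw [← hx]
        rw [← Equiv.Perm.mul_apply, ← zpow_add, neg_add_cancel, zpow_zero,
          Equiv.Perm.coe_one, id_eq] } with hSt
  obtain ⟨a, ha⟩ := Int.subgroup_cyclic St
  have stab : ∀ m : ℤ, (Γ.ρ ^ m) h0 = h0 ↔ a ∣ m := by
    intro m
    have : m ∈ St ↔ m ∈ AddSubgroup.closure ({a} : Set ℤ) := by rw [ha]
    rw [AddSubgroup.mem_closure_singleton] at this
    constructor
    · intro hm
      obtain ⟨n, hn⟩ := this.1 hm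
      exact ⟨n, by rw [← hn, zsmul_eq_mul, Int.cast_id, mul_comm]⟩
    · rintro ⟨n, hn⟩
      exact this.2 ⟨n, by rw [zsmul_eq_mul, Int.cast_id, hn, mul_comm]⟩
  -- a ≠ 0, by pigeonhole on the finite fiber
  have hane : a ≠ 0 := by
    have hfs := hfin v
    have : Finite (Γ.s ⁻¹' {v}) := hfs.to_subtype
    have hmem : ∀ k : ℤ, (Γ.ρ ^ k) h0 ∈ Γ.s ⁻¹' {v} := by
      intro k; simp [Set.mem_preimage, hsρ, hh0]
    obtain ⟨x, y, hxy, hfxy⟩ :=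
      Finite.exists_ne_map_eq_of_infinite (fun k : ℤ => (⟨(Γ.ρ ^ k) h0, hmem k⟩ : Γ.s ⁻¹' {v}))
    have hxy' : (Γ.ρ ^ x) h0 = (Γ.ρ ^ y) h0 := congrArg Subtype.val hfxy
    have h1 : (Γ.ρ ^ (x - y)) h0 = h0 := by
      have := congrArg (fun z => (Γ.ρ ^ (-y)) z) hxy'
      simp only [← Equiv.Perm.mul_apply, ← zpow_add] at this
      rw [show -y + x = x - y by ring] at this
      rw [this, neg_add_cancel, zpow_zero, Equiv.Perm.coe_one, id_eq]
    intro ha0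
    have := (stab _).1 h1
    rw [ha0, zero_dvd_iff, sub_eq_zero] at this
    exact hxy this
  -- every element of the fiber is a power of ρ applied to h0
  have hfib : ∀ h : H, Γ.s h = v → ∃ m : ℤ, (Γ.ρ ^ m) h0 = h := by
    intro h hh
    exact Γ.ρ_trans h0 h (by rw [hh0, hh])
  set n0 : ℕ := a.natAbs with hn0
  have hn0pos : 0 < n0 := Int.natAbs_pos.2 hane
  haveI : NeZero n0 := ⟨hn0pos.ne'⟩
  have stab' : ∀ m : ℤ, (Γ.ρ ^ m) h0 = h0 ↔ (n0 : ℤ) ∣ m := by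
    intro m; rw [stab, hn0, Int.natAbs_dvd]
  -- general ZMod fact
  have hzmod : ∀ (g : ℕ) [NeZero g] (m : ℤ), (g : ℤ) ∣ m - ((m : ZMod g).val : ℤ) := by
    intro g _ m
    rw [← ZMod.intCast_zmod_eq_zero_iff_dvd]
    push_cast
    rw [ZMod.natCast_val, ZMod.cast_id, sub_self]
  -- the fiber has exactly n0 elements
  have hcard : (Γ.s ⁻¹' {v}).ncard = n0 := by
    have e0inj : Function.Injective
        (fun k : ZMod n0 => (Γ.ρ ^ (k.val : ℤ)) h0) := by
      intro k k' hkk'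
      simp only at hkk'
      have : (Γ.ρ ^ ((k.val : ℤ) - (k'.val : ℤ))) h0 = h0 := by
        have := congrArg (fun z => (Γ.ρ ^ (-(k'.val : ℤ))) z) hkk'
        simp only [← Equiv.Perm.mul_apply, ← zpow_add] at this
        rw [show -(k'.val : ℤ) + (k.val : ℤ) = (k.val : ℤ) - k'.val by ring] at this
        rw [this, neg_add_cancel, zpow_zero, Equiv.Perm.coe_one, id_eq]
      have hdvd := (stab' _).1 this
      have hlt : |((k.val : ℤ) - (k'.val : ℤ))| < (n0 : ℤ) := by
        rw [abs_sub_lt_iff]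
        constructor <;>
        · have h1 := ZMod.val_lt k
          have h2 := ZMod.val_lt k'
          omega
      have := Int.eq_zero_of_abs_lt_dvd hdvd hlt
      have hval : k.val = k'.val := by omega
      exact ZMod.val_injective _ hval
    have hrange : Set.range (fun k : ZMod n0 => (Γ.ρ ^ (k.val : ℤ)) h0)
        = Γ.s ⁻¹' {v} := by
      ext h
      constructor
      · rintro ⟨k, rfl⟩
        simp [Set.mem_preimage, hsρ, hh0]
      · intro hh
        obtain ⟨m, hm⟩ := hfib h hh
        refine ⟨(m : ZMod n0), ?_⟩
        simp only
        rw [← hm]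
        have : (Γ.ρ ^ (m - (((m : ZMod n0).val : ℤ)))) h0 = h0 :=
          (stab' _).2 (hzmod n0 m)
        have := congrArg (fun z => (Γ.ρ ^ (((m : ZMod n0).val : ℤ))) z) this
        simp only [← Equiv.Perm.mul_apply, ← zpow_add] at this
        rw [show ((m : ZMod n0).val : ℤ) + (m - ((m : ZMod n0).val : ℤ)) = m by ring] at this
        exact this.symm
    rw [← hrange, ← Set.image_univ, Set.ncard_image_of_injective _ e0inj,
      Set.ncard_univ, Nat.card_zmod]
  -- gcd
  set g : ℕ := Int.gcd a d with hg
  have hgpos : 0 < g := by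
    rw [hg]
    rcases Nat.eq_zero_or_pos (Int.gcd a d) with h | h
    · exact absurd ((Int.gcd_eq_zero_iff).1 h).1 hane
    · exact h
  haveI : NeZero g := ⟨hgpos.ne'⟩
  -- key characterization of orbit equality
  have mkEq : ∀ p q : ℤ,
      (Quotient.mk (permOrbitSetoid ν) ((Γ.ρ ^ p) h0)
        = Quotient.mk (permOrbitSetoid ν) ((Γ.ρ ^ q) h0)) ↔ (g : ℤ) ∣ p - q := by
    intro p q
    rw [Quotient.eq]
    show (∃ k : ℤ, (ν ^ k) ((Γ.ρ ^ p) h0) = (Γ.ρ ^ q) h0) ↔ _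
    have hsp : Γ.s ((Γ.ρ ^ p) h0) = v := by rw [hsρ, hh0]
    constructor
    · rintro ⟨k, hk⟩
      rw [hν' _ hsp, ← Equiv.Perm.mul_apply, ← zpow_add] at hk
      have : (Γ.ρ ^ (k * d + p - q)) h0 = h0 := by
        have := congrArg (fun z => (Γ.ρ ^ (-q)) z) hk
        simp only [← Equiv.Perm.mul_apply, ← zpow_add] at this
        rw [show -q + (k * d + p) = k * d + p - q by ring] at this
        rw [this, neg_add_cancel, zpow_zero, Equiv.Perm.coe_one, id_eq]
      have hdvd := (stab _).1 this
      -- a ∣ (p - q) + k * d, so gcd a d ∣ p - q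
      obtain ⟨t, ht⟩ := hdvd
      have h1 : (g : ℤ) ∣ a := by rw [hg]; exact Int.gcd_dvd_left a d
      have h2 : (g : ℤ) ∣ d := by rw [hg]; exact Int.gcd_dvd_right a d
      have : p - q = a * t - k * d := by linarith
      rw [this]
      exact dvd_sub (h1.mul_right t) (h2.mul_left k)
    · intro hdvd
      obtain ⟨t, ht⟩ := hdvd
      refine ⟨-(t * Int.gcdB a d), ?_⟩
      rw [hν' _ hsp, ← Equiv.Perm.mul_apply, ← zpow_add]
      have habez : (g : ℤ) = a * Int.gcdA a d + d * Int.gcdB a d := by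
        rw [hg]; exact Int.gcd_eq_gcd_ab a d
      have : -(t * Int.gcdB a d) * d + p - q = a * (t * Int.gcdA a d) := by
        have : p - q = (g : ℤ) * t := ht
        rw [habez] at this
        linarith [this]
      have hst : (Γ.ρ ^ (-(t * Int.gcdB a d) * d + p - q)) h0 = h0 :=
        (stab _).2 ⟨t * Int.gcdA a d, this⟩
      have := congrArg (fun z => (Γ.ρ ^ q) z) hst
      simp only [← Equiv.Perm.mul_apply, ← zpow_add] at this
      rw [show q + (-(t * Int.gcdB a d) * d + p - q) = -(t * Int.gcdB a d) * d + p by ring]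
        at this
      exact this
  -- the set of orbits equals the range of an injective map from ZMod g
  set S : Set (Quotient (permOrbitSetoid ν)) :=
    {x | ∃ h : H, Γ.s h = v ∧ x = Quotient.mk (permOrbitSetoid ν) h} with hS
  have einj : Function.Injective
      (fun k : ZMod g => Quotient.mk (permOrbitSetoid ν) ((Γ.ρ ^ (k.val : ℤ)) h0)) := by
    intro k k' hkk'
    simp only at hkk'
    have hdvd := (mkEq _ _).1 hkk'
    have hlt : |((k.val : ℤ) - (k'.val : ℤ))| < (g : ℤ) := by
      rw [abs_sub_lt_iff]
      constructor <;>
      · have h1 := ZMod.val_lt k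
        have h2 := ZMod.val_lt k'
        omega
    have := Int.eq_zero_of_abs_lt_dvd hdvd hlt
    have hval : k.val = k'.val := by omega
    exact ZMod.val_injective _ hval
  have hrange : Set.range
      (fun k : ZMod g => Quotient.mk (permOrbitSetoid ν) ((Γ.ρ ^ (k.val : ℤ)) h0)) = S := by
    ext x
    constructor
    · rintro ⟨k, rfl⟩
      exact ⟨(Γ.ρ ^ (k.val : ℤ)) h0, by rw [hsρ, hh0], rfl⟩
    · rintro ⟨h, hh, rfl⟩
      obtain ⟨m, hm⟩ := hfib h hh
      refine ⟨(m : ZMod g), ?_⟩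
      simp only
      rw [← hm]
      exact (mkEq _ _).2 (dvd_sub_comm.1 (hzmod g m))
  have hScard : S.ncard = g := by
    rw [← hrange, ← Set.image_univ, Set.ncard_image_of_injective _ einj,
      Set.ncard_univ, Nat.card_zmod]
  have hgcd : g = Int.gcd ((Γ.s ⁻¹' {v}).ncard : ℤ) (Γ.d v) := by
    rw [hcard, hg, ← hd, hn0]
    simp [Int.gcd, Int.natAbs_abs]
  refine ⟨by rw [hScard, hgcd], ?_, by rw [hScard]; exact hgpos⟩
  rw [hScard]
  have hdv : (g : ℤ) ∣ d := by rw [hg]; exact Int.gcd_dvd_right a d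
  exact hdv
end

section
/- Let Γ = (V, H, s, ι, ρ) be a ribbon graph with every fiber s⁻¹(v) finite, n_v = val(v), fix a cutting {φ_v} and r ≥ 1, and let Γ^{(r)} be the r-fold cover. Let d : V → ℤ_{>0} be given by d(v) = n_v (so Γ with multiplicity function m ≡ 1). Then (Γ^{(r)}, d) is an admissible fractional Brauer graph: axioms (i) ι̃(ρ̃^{d(s̃(x))}(x)) = ρ̃^{d(s̃(ι̃(x)))}(ι̃(x)) and (ii) ρ̃^{n·d(s̃(x))}(x) ≠ ι̃(x) for every integer n hold for every half-edge x of Γ^{(r)}; its Nakayama map satisfies ν̃(h, j) = (h, j+1); and every ⟨ν̃⟩-orbit on H × ℤ/rℤ has exactly r elements. -/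
/-- A cutting of a ribbon graph with finite fibers: for each vertex `v` a
bijection `φ v : Fin (n v) → s⁻¹(v)` enumerating the fiber compatibly with
`ρ`, i.e. `ρ(φ v i) = φ v (i+1)` for `i + 1 < n v`. -/
structure Cutting {V H : Type*} (Γ : RibbonGraph V H) where
  n : V → ℕ
  φ : ∀ v, Fin (n v) → H
  φ_s : ∀ v i, Γ.s (φ v i) = v
  φ_inj : ∀ v, Function.Injective (φ v)
  φ_surj : ∀ v h, Γ.s h = v → ∃ i, φ v i = h
  φ_ρ : ∀ (v) (i : Fin (n v)) (hi : (i : ℕ) + 1 < n v),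
      Γ.ρ (φ v i) = φ v ⟨(i : ℕ) + 1, hi⟩

/-- The index of a half-edge in the enumeration of its fiber. -/
noncomputable def Cutting.idx {V H : Type*} {Γ : RibbonGraph V H}
    (C : Cutting Γ) (h : H) : Fin (C.n (Γ.s h)) :=
  (C.φ_surj (Γ.s h) h rfl).choose

/-- The permutation `ρ̃` of the cover with half-edge set `H × J`
(for `J = ℤ/rℤ` or `J = ℤ`): with `s(h) = v` and `h = φ_v(i)`,
`ρ̃(h, j) = (φ_v(i+1), j)` if `i < n_v − 1`, and
`ρ̃(h, j) = (φ_v(0), j+1)` if `i = n_v − 1`. -/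
noncomputable def coverRho {V H : Type*} {Γ : RibbonGraph V H} (C : Cutting Γ)
    {J : Type*} [Add J] [One J] : H × J → H × J :=
  fun x =>
    if hlt : (C.idx x.1 : ℕ) + 1 < C.n (Γ.s x.1) then
      (C.φ (Γ.s x.1) ⟨(C.idx x.1 : ℕ) + 1, hlt⟩, x.2)
    else
      (C.φ (Γ.s x.1) ⟨0, Nat.lt_of_le_of_lt (Nat.zero_le _) (C.idx x.1).isLt⟩, x.2 + 1)

section Aux

variable {V H : Type*} {Γ : RibbonGraph V H} (C : Cutting Γ)

lemma Cutting.phi_congr {v w : V} (hvw : v = w) (i : Fin (C.n v)) :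
    C.φ v i = C.φ w (Fin.cast (by rw [hvw]) i) := by subst hvw; rfl

lemma Cutting.phi_idx (h : H) : C.φ (Γ.s h) (C.idx h) = h :=
  (C.φ_surj (Γ.s h) h rfl).choose_spec

lemma Cutting.idx_val_phi (v : V) (i : Fin (C.n v)) :
    ((C.idx (C.φ v i)) : ℕ) = (i : ℕ) := by
  have hs : Γ.s (C.φ v i) = v := C.φ_s v i
  have h1 : C.φ (Γ.s (C.φ v i)) (C.idx (C.φ v i)) = C.φ v i := C.phi_idx _
  rw [C.phi_congr hs] at h1
  have := C.φ_inj v h1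
  have := congrArg Fin.val this
  simpa using this

variable {J : Type*} [Add J] [One J]

lemma coverRho_step (v : V) (i : ℕ) (hi0 : i < C.n v) (hi : i + 1 < C.n v) (j : J) :
    coverRho C (C.φ v ⟨i, hi0⟩, j) = (C.φ v ⟨i + 1, hi⟩, j) := by
  have hs : Γ.s (C.φ v ⟨i, hi0⟩) = v := C.φ_s v _
  have hv : ((C.idx (C.φ v ⟨i, hi0⟩)) : ℕ) = i := C.idx_val_phi v ⟨i, hi0⟩
  simp only [coverRho]
  rw [dif_pos (by rw [hv, hs]; exact hi)]
  rw [C.phi_congr hs]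
  simp only [Prod.mk.injEq, and_true]
  congr 1
  exact Fin.ext (by simp [hv])

lemma coverRho_wrap (v : V) (i : ℕ) (hi0 : i < C.n v) (hi : ¬ (i + 1 < C.n v)) (j : J) :
    coverRho C (C.φ v ⟨i, hi0⟩, j) =
      (C.φ v ⟨0, Nat.lt_of_le_of_lt (Nat.zero_le _) hi0⟩, j + 1) := by
  have hs : Γ.s (C.φ v ⟨i, hi0⟩) = v := C.φ_s v _
  have hv : ((C.idx (C.φ v ⟨i, hi0⟩)) : ℕ) = i := C.idx_val_phi v ⟨i, hi0⟩
  simp only [coverRho]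
  rw [dif_neg (by rw [hv, hs]; exact hi)]
  rw [C.phi_congr hs]
  rfl

lemma coverRho_iter_of_lt (v : V) (k : ℕ) : ∀ (i : ℕ) (hi0 : i < C.n v)
    (hk : i + k < C.n v) (j : J),
    (coverRho C)^[k] (C.φ v ⟨i, hi0⟩, j) = (C.φ v ⟨i + k, hk⟩, j) := by
  induction k with
  | zero => intro i hi0 hk j; simp
  | succ k ih =>
    intro i hi0 hk j
    have h1 : i + 1 < C.n v := by omega
    rw [Function.iterate_succ_apply, coverRho_step C v i hi0 h1 j,
      ih (i + 1) h1 (by omega) j]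
    simp only [Prod.mk.injEq, and_true]
    congr 1
    simp only [Fin.mk.injEq]
    omega

lemma coverRho_iter_full (h : H) (j : J) :
    (coverRho C)^[C.n (Γ.s h)] (h, j) = (h, j + 1) := by
  set v := Γ.s h with hv
  set i : Fin (C.n v) := C.idx h with hidef
  have hphi : C.φ v i = h := C.phi_idx h
  have hipos : (i : ℕ) < C.n v := i.isLt
  have hnpos : 0 < C.n v := Nat.lt_of_le_of_lt (Nat.zero_le _) hipos
  have hsplit : C.n v = (i : ℕ) + (C.n v - (i : ℕ)) := by omega
  rw [← hphi, hsplit, Function.iterate_add_apply]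
  -- first do (n - i) steps: reach (φ v 0, j + 1)
  have hmid : (coverRho C)^[C.n v - (i : ℕ)] (C.φ v ⟨(i : ℕ), hipos⟩, j)
      = (C.φ v ⟨0, hnpos⟩, j + 1) := by
    have h2 : C.n v - (i : ℕ) = (C.n v - 1 - (i : ℕ)) + 1 := by omega
    rw [h2, Function.iterate_succ_apply',
      coverRho_iter_of_lt C v (C.n v - 1 - (i : ℕ)) (i : ℕ) hipos (by omega) j]
    have h3 : (i : ℕ) + (C.n v - 1 - (i : ℕ)) = C.n v - 1 := by omega
    rw [coverRho_wrap C v _ _ (by omega) j]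
  have hieq : (⟨(i : ℕ), hipos⟩ : Fin (C.n v)) = i := rfl
  rw [← hieq, hmid, coverRho_iter_of_lt C v (i : ℕ) 0 hnpos (by omega) (j + 1)]
  simp only [Prod.mk.injEq, and_true]
  congr 1
  exact Fin.ext (by simp)

end Aux

/-- with d(v) = n_v = val(v) (multiplicity function m ≡ 1), the
r-fold cover (Γ^{(r)}, d) is an admissible fractional Brauer graph: AFBG
axioms (i) and (ii) hold for every half-edge x of Γ^{(r)}, its Nakayama map
satisfies ν̃(h, j) = (h, j+1), and every ⟨ν̃⟩-orbit on H × ℤ/rℤ has exactly r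
elements. Here ρt is the permutation ρ̃ of the cover and νt its Nakayama
map. -/
theorem stmt14 {V H : Type*} (Γ : RibbonGraph V H) (C : Cutting Γ)
    (r : ℕ) (hr : 1 ≤ r)
    (ρt : Equiv.Perm (H × ZMod r)) (hρt : ∀ x, ρt x = coverRho C x)
    (νt : Equiv.Perm (H × ZMod r))
    (hνt : ∀ x : H × ZMod r, νt x = (ρt ^ (C.n (Γ.s x.1) : ℤ)) x) :
    (∀ x : H × ZMod r,
      ((Γ.ι ((ρt ^ (C.n (Γ.s x.1) : ℤ)) x).1, ((ρt ^ (C.n (Γ.s x.1) : ℤ)) x).2)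
          : H × ZMod r)
        = (ρt ^ (C.n (Γ.s (Γ.ι x.1)) : ℤ)) (Γ.ι x.1, x.2)) ∧
    (∀ (x : H × ZMod r) (m : ℤ),
      (ρt ^ (m * (C.n (Γ.s x.1) : ℤ))) x ≠ ((Γ.ι x.1, x.2) : H × ZMod r)) ∧
    (∀ (h : H) (j : ZMod r), νt (h, j) = (h, j + 1)) ∧
    (∀ x : H × ZMod r,
      Set.ncard {y : H × ZMod r | ∃ k : ℤ, (νt ^ k) x = y} = r) := by

  have hpow : ∀ (k : ℕ) (x : H × ZMod r), (ρt ^ k) x = (coverRho C)^[k] x := by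
    intro k
    induction k with
    | zero => intro x; simp
    | succ k ih =>
      intro x
      rw [pow_succ, Equiv.Perm.mul_apply, hρt, Function.iterate_succ_apply, ih]
  have hn : ∀ x : H × ZMod r, (ρt ^ (C.n (Γ.s x.1) : ℤ)) x = (x.1, x.2 + 1) := by
    intro x
    rw [zpow_natCast, hpow]
    exact coverRho_iter_full C x.1 x.2
  have hnneg : ∀ x : H × ZMod r, (ρt ^ (-(C.n (Γ.s x.1) : ℤ))) x = (x.1, x.2 - 1) := by
    intro x
    have h1 : (ρt ^ ((C.n (Γ.s x.1) : ℤ))) (x.1, x.2 - 1) = x := by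
      rw [hn (x.1, x.2 - 1)]; simp
    rw [zpow_neg, Equiv.Perm.inv_def, Equiv.symm_apply_eq]
    exact h1.symm
  have hmul : ∀ (m : ℤ) (x : H × ZMod r),
      (ρt ^ (m * (C.n (Γ.s x.1) : ℤ))) x = (x.1, x.2 + (m : ZMod r)) := by
    intro m
    induction m using Int.induction_on with
    | zero => intro x; simp
    | succ k ih =>
      intro x
      have hsplit : ((k : ℤ) + 1) * (C.n (Γ.s x.1) : ℤ)
          = (k : ℤ) * (C.n (Γ.s x.1) : ℤ) + (C.n (Γ.s x.1) : ℤ) := by ring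
      rw [hsplit, zpow_add, Equiv.Perm.mul_apply, hn x]
      have := ih (x.1, x.2 + 1)
      simp only at this
      rw [this]
      push_cast
      ring_nf
    | pred k ih =>
      intro x
      have hsplit : (-(k : ℤ) - 1) * (C.n (Γ.s x.1) : ℤ)
          = (-(k : ℤ)) * (C.n (Γ.s x.1) : ℤ) + (-(C.n (Γ.s x.1) : ℤ)) := by ring
      rw [hsplit, zpow_add, Equiv.Perm.mul_apply, hnneg x]
      have := ih (x.1, x.2 - 1)
      simp only at this
      rw [this]
      push_cast
      ring_nf
  have hν : ∀ (h : H) (j : ZMod r), νt (h, j) = (h, j + 1) := by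
    intro h j
    rw [hνt (h, j)]
    exact hn (h, j)
  have hνk : ∀ (k : ℤ) (x : H × ZMod r), (νt ^ k) x = (x.1, x.2 + (k : ZMod r)) := by
    have hνinv : ∀ x : H × ZMod r, νt⁻¹ x = (x.1, x.2 - 1) := by
      intro x
      have h1 : νt (x.1, x.2 - 1) = x := by rw [hν]; simp
      rw [Equiv.Perm.inv_def, Equiv.symm_apply_eq]
      exact h1.symm
    intro k
    induction k using Int.induction_on with
    | zero => intro x; simp
    | succ k ih =>
      intro x
      have hsplit : ((k : ℤ) + 1) = 1 + (k : ℤ) := by ring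
      rw [hsplit, zpow_add, Equiv.Perm.mul_apply, ih x, zpow_one, hν]
      push_cast
      ring_nf
    | pred k ih =>
      intro x
      have hsplit : (-(k : ℤ) - 1) = (-1 : ℤ) + (-(k : ℤ)) := by ring
      rw [hsplit, zpow_add, Equiv.Perm.mul_apply, ih x, zpow_neg_one, hνinv]
      push_cast
      ring_nf
  refine ⟨?_, ?_, hν, ?_⟩
  · intro x
    rw [hn x]
    have := hn (Γ.ι x.1, x.2)
    simp only at this
    rw [this]
  · intro x m hcon
    rw [hmul m x] at hcon
    have h1 : x.1 = Γ.ι x.1 := congrArg Prod.fst hcon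
    exact Γ.ι_ne x.1 h1.symm
  · intro x
    haveI : NeZero r := ⟨by omega⟩
    have hset : {y : H × ZMod r | ∃ k : ℤ, (νt ^ k) x = y}
        = (fun c : ZMod r => (x.1, c)) '' Set.univ := by
      ext y
      simp only [Set.mem_setOf_eq, Set.image_univ, Set.mem_range]
      constructor
      · rintro ⟨k, rfl⟩
        exact ⟨x.2 + (k : ZMod r), by rw [hνk]⟩
      · rintro ⟨c, rfl⟩
        obtain ⟨k, hk⟩ := ZMod.intCast_surjective (n := r) (c - x.2)
        exact ⟨k, by rw [hνk, hk]; simp⟩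
    rw [hset, Set.ncard_image_of_injective _ (fun a b hab => (Prod.ext_iff.mp hab).2),
      Set.ncard_univ, Nat.card_zmod]
end
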